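/- Fix an integer ν ≥ 1 and let V : ℤ^ν → ℝ be bounded with V(n) → 0 as |n|₁ → ∞. If H₀ + (4ν)⁻¹V² has an eigenvalue E with |E| > 2ν (where V² denotes multiplication by V(n)²), then H₀ + V has an eigenvalue E′ with |E′| > 2ν. -/

import Mathlib

noncomputable section

open scoped ComplexConjugate

namespace DHKS

/-- The Hilbert space ℓ²(α; ℂ). -/
abbrev L2 (α : Type*) := lp (fun _ : α => ℂ) 2

variable {α β : Type*}

lemma memℓp_two_iff (f : α → ℂ) :
    Memℓp f 2 ↔ Summable (fun n => ‖f n‖ ^ (2 : ℝ)) := by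
  rw [memℓp_gen_iff (by norm_num)]
  norm_num

lemma sum_sq_le (u : L2 α) (s : Finset α) :
    ∑ n ∈ s, ‖(u : α → ℂ) n‖ ^ (2:ℝ) ≤ ‖u‖ ^ (2:ℝ) := by
  simpa using lp.sum_rpow_le_norm_rpow (p := 2) (by norm_num) u s

lemma norm_le_of_sum_sq (u : L2 α) {C : ℝ} (hC : 0 ≤ C)
    (h : ∀ s : Finset α, ∑ n ∈ s, ‖(u : α → ℂ) n‖ ^ (2:ℝ) ≤ C ^ (2:ℝ)) : ‖u‖ ≤ C := by
  refine lp.norm_le_of_forall_sum_le (p := 2) (by norm_num) hC ?_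
  simpa using h

/-- Composition with an injective map, as a continuous linear map on ℓ². -/
def compOp (σ : α → β) (hσ : Function.Injective σ) : L2 β →L[ℂ] L2 α :=
  LinearMap.mkContinuous
    { toFun := fun u => ⟨fun n => (u : β → ℂ) (σ n), by
        apply (memℓp_two_iff _).2
        exact ((memℓp_two_iff _).1 (lp.memℓp u)).comp_injective hσ⟩
      map_add' := by
        intro u v; apply lp.ext; funext n
        simp only [lp.coeFn_add, Pi.add_apply]
      map_smul' := by
        intro c u; apply lp.ext; funext n
        simp only [lp.coeFn_smul, Pi.smul_apply, RingHom.id_apply] }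
    1 (by
      intro u
      rw [one_mul]
      refine norm_le_of_sum_sq _ (norm_nonneg u) (fun s => ?_)
      classical
      calc ∑ n ∈ s, ‖(u : β → ℂ) (σ n)‖ ^ (2:ℝ)
          = ∑ m ∈ s.image σ, ‖(u : β → ℂ) m‖ ^ (2:ℝ) := by
            rw [Finset.sum_image (fun a _ b _ h => hσ h)]
        _ ≤ ‖u‖ ^ (2:ℝ) := sum_sq_le u _)

@[simp] lemma compOp_apply (σ : α → β) (hσ : Function.Injective σ) (u : L2 β) (n : α) :
    (compOp σ hσ u : α → ℂ) n = (u : β → ℂ) (σ n) := rfl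

/-- Multiplication by a bounded real-valued function, as a continuous linear map on ℓ². -/
def mulOp (V : α → ℝ) (C : ℝ) (hC : ∀ n, |V n| ≤ C) : L2 α →L[ℂ] L2 α :=
  LinearMap.mkContinuous
    { toFun := fun u => ⟨fun n => (V n : ℂ) * (u : α → ℂ) n, by
        apply (memℓp_two_iff _).2
        have h := (((memℓp_two_iff _).1 (lp.memℓp u)).mul_left ((max C 0) ^ (2:ℝ)))
        apply Summable.of_nonneg_of_le (fun n => by positivity) (fun n => ?_) h
        have h1 : ‖(V n : ℂ) * (u : α → ℂ) n‖ = |V n| * ‖(u : α → ℂ) n‖ := by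
          rw [norm_mul, Complex.norm_real, Real.norm_eq_abs]
        rw [h1, Real.mul_rpow (abs_nonneg _) (norm_nonneg _)]
        have h3 : |V n| ^ (2:ℝ) ≤ (max C 0) ^ (2:ℝ) :=
          Real.rpow_le_rpow (abs_nonneg _) (le_max_of_le_left (hC n)) (by norm_num)
        exact mul_le_mul_of_nonneg_right h3 (by positivity)⟩
      map_add' := by
        intro u v; apply lp.ext; funext n
        simp only [lp.coeFn_add, Pi.add_apply]
        ring
      map_smul' := by
        intro c u; apply lp.ext; funext n
        simp only [lp.coeFn_smul, Pi.smul_apply, RingHom.id_apply, smul_eq_mul]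
        ring }
    (max C 0) (by
      intro u
      refine norm_le_of_sum_sq _ (by positivity) (fun s => ?_)
      have key : ∀ n ∈ s, ‖(V n : ℂ) * (u : α → ℂ) n‖ ^ (2:ℝ)
          ≤ (max C 0) ^ (2:ℝ) * ‖(u : α → ℂ) n‖ ^ (2:ℝ) := by
        intro n _
        have h1 : ‖(V n : ℂ) * (u : α → ℂ) n‖ = |V n| * ‖(u : α → ℂ) n‖ := by
          rw [norm_mul, Complex.norm_real, Real.norm_eq_abs]
        rw [h1, Real.mul_rpow (abs_nonneg _) (norm_nonneg _)]
        have h3 : |V n| ^ (2:ℝ) ≤ (max C 0) ^ (2:ℝ) :=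
          Real.rpow_le_rpow (abs_nonneg _) (le_max_of_le_left (hC n)) (by norm_num)
        exact mul_le_mul_of_nonneg_right h3 (by positivity)
      calc ∑ n ∈ s, ‖(V n : ℂ) * (u : α → ℂ) n‖ ^ (2:ℝ)
          ≤ ∑ n ∈ s, (max C 0) ^ (2:ℝ) * ‖(u : α → ℂ) n‖ ^ (2:ℝ) := Finset.sum_le_sum key
        _ = (max C 0) ^ (2:ℝ) * ∑ n ∈ s, ‖(u : α → ℂ) n‖ ^ (2:ℝ) := by rw [Finset.mul_sum]
        _ ≤ (max C 0) ^ (2:ℝ) * ‖u‖ ^ (2:ℝ) :=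
            mul_le_mul_of_nonneg_left (sum_sq_le u _) (by positivity)
        _ = (max C 0 * ‖u‖) ^ (2:ℝ) :=
            (Real.mul_rpow (le_max_right _ _) (norm_nonneg _)).symm)

@[simp] lemma mulOp_apply (V : α → ℝ) (C : ℝ) (hC : ∀ n, |V n| ≤ C) (u : L2 α) (n : α) :
    (mulOp V C hC u : α → ℂ) n = (V n : ℂ) * (u : α → ℂ) n := rfl

/-- Extension by zero along an injective map, as a continuous linear map on ℓ². -/
def extOp (σ : α → β) (hσ : Function.Injective σ) : L2 α →L[ℂ] L2 β :=
  LinearMap.mkContinuous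
    { toFun := fun u => ⟨Function.extend σ (u : α → ℂ) 0, by
        apply (memℓp_two_iff _).2
        have hpt : (fun b => ‖Function.extend σ (u : α → ℂ) 0 b‖ ^ (2:ℝ))
            = Function.extend σ (fun a => ‖(u : α → ℂ) a‖ ^ (2:ℝ)) 0 := by
          funext b
          rcases em (∃ a, σ a = b) with ⟨a, rfl⟩ | hb
          · rw [hσ.extend_apply, hσ.extend_apply]
          · rw [Function.extend_apply' _ _ _ hb, Function.extend_apply' _ _ _ hb]
            simp [Real.zero_rpow (by norm_num : (2:ℝ) ≠ 0)]
        rw [hpt, summable_extend_zero hσ]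
        exact (memℓp_two_iff _).1 (lp.memℓp u)⟩
      map_add' := by
        intro u v; apply lp.ext; funext b
        simp only [lp.coeFn_add, Pi.add_apply]
        rcases em (∃ a, σ a = b) with ⟨a, rfl⟩ | hb
        · rw [hσ.extend_apply, hσ.extend_apply, hσ.extend_apply]
          simp [lp.coeFn_add]
        · rw [Function.extend_apply' _ _ _ hb, Function.extend_apply' _ _ _ hb,
            Function.extend_apply' _ _ _ hb]
          simp
      map_smul' := by
        intro c u; apply lp.ext; funext b
        simp only [lp.coeFn_smul, Pi.smul_apply, RingHom.id_apply, smul_eq_mul]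
        rcases em (∃ a, σ a = b) with ⟨a, rfl⟩ | hb
        · rw [hσ.extend_apply, hσ.extend_apply]
          simp [lp.coeFn_smul]
        · rw [Function.extend_apply' _ _ _ hb, Function.extend_apply' _ _ _ hb]
          simp }
    1 (by
      intro u
      rw [one_mul]
      refine norm_le_of_sum_sq _ (norm_nonneg u) (fun s => ?_)
      have hpt : (fun b => ‖Function.extend σ (u : α → ℂ) 0 b‖ ^ (2:ℝ))
          = Function.extend σ (fun a => ‖(u : α → ℂ) a‖ ^ (2:ℝ)) 0 := by
        funext b
        rcases em (∃ a, σ a = b) with ⟨a, rfl⟩ | hb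
        · rw [hσ.extend_apply, hσ.extend_apply]
        · rw [Function.extend_apply' _ _ _ hb, Function.extend_apply' _ _ _ hb]
          simp [Real.zero_rpow (by norm_num : (2:ℝ) ≠ 0)]
      have hsumm : Summable (fun a => ‖(u : α → ℂ) a‖ ^ (2:ℝ)) :=
        (memℓp_two_iff _).1 (lp.memℓp u)
      calc ∑ b ∈ s, ‖Function.extend σ (u : α → ℂ) 0 b‖ ^ (2:ℝ)
          ≤ ∑' b, ‖Function.extend σ (u : α → ℂ) 0 b‖ ^ (2:ℝ) := by
            refine Summable.sum_le_tsum s (fun b _ => by positivity) ?_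
            rw [hpt, summable_extend_zero hσ]; exact hsumm
        _ = ∑' a, ‖(u : α → ℂ) a‖ ^ (2:ℝ) := by
            rw [hpt, tsum_extend_zero hσ]
        _ = ‖u‖ ^ (2:ℝ) := by
            simpa using (lp.norm_rpow_eq_tsum (p := 2) (by norm_num) u).symm)

lemma extOp_apply (σ : α → β) (hσ : Function.Injective σ) (u : L2 α) (b : β) :
    (extOp σ hσ u : β → ℂ) b = Function.extend σ (u : α → ℂ) 0 b := rfl

/-- The real quadratic form ⟨φ, A φ⟩ of an operator. -/
def quadForm (A : L2 α →L[ℂ] L2 α) (φ : L2 α) : ℝ :=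
  (inner ℂ φ (A φ) : ℂ).re

/-- `E` is an eigenvalue of the bounded operator `A`. -/
def IsEigenvalue (A : L2 α →L[ℂ] L2 α) (E : ℝ) : Prop :=
  ∃ u : L2 α, u ≠ 0 ∧ A u = (E : ℂ) • u

lemma abs_mul_sq_le {γ x Cb : ℝ} (h : |x| ≤ Cb) : |γ * x ^ 2| ≤ |γ| * Cb ^ 2 := by
  have h1 := abs_le.1 h
  rw [abs_mul, abs_of_nonneg (sq_nonneg x)]
  exact mul_le_mul_of_nonneg_left (sq_le_sq' (by linarith [h1.1]) h1.2) (abs_nonneg γ)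

end DHKS

namespace DHKS

/-! ## The lattice ℤ^ν -/

/-- The lattice `ℤ^ν`. -/
abbrev Zlat (ν : ℕ) := Fin ν → ℤ

/-- The ℓ¹-norm `|n|₁ = |n₁| + ⋯ + |n_ν|` of a lattice point. -/
def normOne {ν : ℕ} (n : Zlat ν) : ℕ := ∑ i, (n i).natAbs

/-- The `i`-th standard unit vector in `ℤ^ν`. -/
def unitVec (ν : ℕ) (i : Fin ν) : Zlat ν := fun k => if k = i then 1 else 0

/-- The free discrete Schrödinger operator `(H₀ u)(n) = ∑_{|j|₁ = 1} u(n+j)`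
on `ℓ²(ℤ^ν)`, written as the sum over translations by `± eᵢ`. -/
def H0 (ν : ℕ) : L2 (Zlat ν) →L[ℂ] L2 (Zlat ν) :=
  ∑ i : Fin ν,
    (compOp (fun n => n + unitVec ν i) (add_left_injective _) +
      compOp (fun n => n + (-unitVec ν i)) (add_left_injective _))

lemma H0_apply {ν : ℕ} (u : L2 (Zlat ν)) (n : Zlat ν) :
    (H0 ν u : Zlat ν → ℂ) n =
      ∑ i : Fin ν, ((u : Zlat ν → ℂ) (n + unitVec ν i) + (u : Zlat ν → ℂ) (n - unitVec ν i)) := by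
  simp [H0, ContinuousLinearMap.sum_apply, lp.coeFn_sum, Finset.sum_apply,
    ContinuousLinearMap.add_apply, lp.coeFn_add, Pi.add_apply, sub_eq_add_neg]
  erw [Finset.sum_apply]
  simp

/-- The unitary `(U φ)(n) = (-1)^{|n|₁} φ(n)`. -/
def Uop (ν : ℕ) : L2 (Zlat ν) →L[ℂ] L2 (Zlat ν) :=
  mulOp (fun n => (-1 : ℝ) ^ normOne n) 1 (fun n => by simp [abs_pow])

/-- The discrete Schrödinger operator `H = H₀ + V` on `ℓ²(ℤ^ν)`. -/
def schrodinger (ν : ℕ) (V : Zlat ν → ℝ) (C : ℝ) (hC : ∀ n, |V n| ≤ C) :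
    L2 (Zlat ν) →L[ℂ] L2 (Zlat ν) :=
  H0 ν + mulOp V C hC

/-- The quantity `Δ(φ₊, φ₋; V) = ⟨φ₊, (H-2ν)φ₊⟩ + ⟨φ₋, (-H-2ν)φ₋⟩`. -/
def Delta (ν : ℕ) (V : Zlat ν → ℝ) (C : ℝ) (hC : ∀ n, |V n| ≤ C)
    (φp φm : L2 (Zlat ν)) : ℝ :=
  quadForm (schrodinger ν V C hC - ((2 * (ν:ℝ) : ℝ) : ℂ) • 1) φp +
    quadForm (-schrodinger ν V C hC - ((2 * (ν:ℝ) : ℝ) : ℂ) • 1) φm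

end DHKS

namespace DHKS

open scoped InnerProductSpace

variable {ν : ℕ}

lemma inner_L2 {α : Type*} (u v : L2 α) :
    ⟪u, v⟫_ℂ = ∑' n, conj ((u : α → ℂ) n) * (v : α → ℂ) n := by
  rw [lp.inner_eq_tsum]; exact tsum_congr fun n => by rw [RCLike.inner_apply]; exact mul_comm _ _

lemma mulOp_sa {α : Type*} (V : α → ℝ) (C : ℝ) (hC : ∀ n, |V n| ≤ C) (u v : L2 α) :
    ⟪mulOp V C hC u, v⟫_ℂ = ⟪u, mulOp V C hC v⟫_ℂ := by
  rw [inner_L2, inner_L2]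
  refine tsum_congr fun n => ?_
  simp only [mulOp_apply, map_mul, Complex.conj_ofReal]
  ring

lemma compOp_adj (e : Zlat ν) (u v : L2 (Zlat ν)) :
    ⟪u, compOp (fun n => n + e) (add_left_injective e) v⟫_ℂ
      = ⟪compOp (fun n => n + (-e)) (add_left_injective (-e)) u, v⟫_ℂ := by
  rw [inner_L2, inner_L2]
  have h := Equiv.tsum_eq (Equiv.addRight e)
    (fun m => conj ((u : Zlat ν → ℂ) (m + (-e))) * (v : Zlat ν → ℂ) m)
  simp only [compOp_apply]
  rw [← h]
  exact tsum_congr fun n => by simp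

lemma H0_sa (u v : L2 (Zlat ν)) : ⟪H0 ν u, v⟫_ℂ = ⟪u, H0 ν v⟫_ℂ := by
  simp only [H0, ContinuousLinearMap.sum_apply, ContinuousLinearMap.add_apply]
  rw [sum_inner, inner_sum]
  refine Finset.sum_congr rfl fun i _ => ?_
  have h1 := compOp_adj (ν := ν) (unitVec ν i) u v
  have h2 := compOp_adj (ν := ν) (-unitVec ν i) u v
  simp only [neg_neg] at h2
  rw [inner_add_left, inner_add_right, h1, h2, add_comm]

lemma norm_compOp_le {α β : Type*} (σ : α → β) (hσ : Function.Injective σ) :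
    ‖compOp σ hσ‖ ≤ 1 :=
  LinearMap.mkContinuous_norm_le _ zero_le_one _

lemma norm_H0_le : ‖H0 ν‖ ≤ 2 * ν := by
  refine le_trans (norm_sum_le _ _) ?_
  calc ∑ i : Fin ν, ‖compOp (fun n => n + unitVec ν i) (add_left_injective _) +
        compOp (fun n => n + (-unitVec ν i)) (add_left_injective _)‖
      ≤ ∑ _i : Fin ν, 2 := by
        refine Finset.sum_le_sum fun i _ => ?_
        refine le_trans (norm_add_le _ _) ?_
        have := norm_compOp_le (fun n : Zlat ν => n + unitVec ν i) (add_left_injective _)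
        have := norm_compOp_le (fun n : Zlat ν => n + (-unitVec ν i)) (add_left_injective _)
        linarith
    _ = 2 * ν := by simp [mul_comm]

lemma abs_re_inner_le {α : Type*} (T : L2 α →L[ℂ] L2 α) (φ : L2 α) :
    |(⟪φ, T φ⟫_ℂ).re| ≤ ‖T‖ * ‖φ‖ ^ 2 := by
  have h1 : |(⟪φ, T φ⟫_ℂ).re| ≤ ‖⟪φ, T φ⟫_ℂ‖ := Complex.abs_re_le_norm _
  refine h1.trans ((norm_inner_le_norm _ _).trans ?_)
  have h2 := T.le_opNorm φ
  have h3 : (0:ℝ) ≤ ‖φ‖ := norm_nonneg _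
  nlinarith

lemma re_inner_self {α : Type*} (x : L2 α) : (⟪x, x⟫_ℂ).re = ‖x‖ ^ 2 :=
  inner_self_eq_norm_sq (𝕜 := ℂ) x

lemma neg_one_pow_natAbs_add_one (z : ℤ) :
    (-1 : ℂ) ^ (z + 1).natAbs = -(-1 : ℂ) ^ z.natAbs := by
  rcases Int.even_or_odd z with hz | hz
  · have h1 : Even z.natAbs := Int.natAbs_even.mpr hz
    have h2 : Odd (z + 1).natAbs := Int.natAbs_odd.mpr (Even.add_one hz)
    rw [h1.neg_one_pow, h2.neg_one_pow]
  · have h1 : Odd z.natAbs := Int.natAbs_odd.mpr hz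
    have h2 : Even (z + 1).natAbs := Int.natAbs_even.mpr (Odd.add_one hz)
    rw [h1.neg_one_pow, h2.neg_one_pow]; ring

lemma neg_one_pow_natAbs_sub_one (z : ℤ) :
    (-1 : ℂ) ^ (z - 1).natAbs = -(-1 : ℂ) ^ z.natAbs := by
  have h := neg_one_pow_natAbs_add_one (z - 1)
  rw [sub_add_cancel] at h
  rw [h]; ring

lemma normOne_add_unitVec (n : Zlat ν) (i : Fin ν) :
    (-1 : ℂ) ^ normOne (n + unitVec ν i) = -(-1 : ℂ) ^ normOne n := by
  have hsplit : ∀ m : Zlat ν, normOne m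
      = (m i).natAbs + ∑ k ∈ Finset.univ.erase i, (m k).natAbs :=
    fun m => (Finset.add_sum_erase _ _ (Finset.mem_univ i)).symm
  have h2 : ∑ k ∈ Finset.univ.erase i, ((n + unitVec ν i) k).natAbs
      = ∑ k ∈ Finset.univ.erase i, (n k).natAbs := by
    refine Finset.sum_congr rfl fun k hk => ?_
    have hki : k ≠ i := Finset.ne_of_mem_erase hk
    simp [unitVec, hki]
  have h1 : (n + unitVec ν i) i = n i + 1 := by simp [unitVec]
  rw [hsplit (n + unitVec ν i), hsplit n, h2, h1, pow_add, pow_add,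
    neg_one_pow_natAbs_add_one]
  ring

lemma normOne_sub_unitVec (n : Zlat ν) (i : Fin ν) :
    (-1 : ℂ) ^ normOne (n - unitVec ν i) = -(-1 : ℂ) ^ normOne n := by
  have hsplit : ∀ m : Zlat ν, normOne m
      = (m i).natAbs + ∑ k ∈ Finset.univ.erase i, (m k).natAbs :=
    fun m => (Finset.add_sum_erase _ _ (Finset.mem_univ i)).symm
  have h2 : ∑ k ∈ Finset.univ.erase i, ((n - unitVec ν i) k).natAbs
      = ∑ k ∈ Finset.univ.erase i, (n k).natAbs := by
    refine Finset.sum_congr rfl fun k hk => ?_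
    have hki : k ≠ i := Finset.ne_of_mem_erase hk
    simp [unitVec, hki]
  have h1 : (n - unitVec ν i) i = n i - 1 := by simp [unitVec]
  rw [hsplit (n - unitVec ν i), hsplit n, h2, h1, pow_add, pow_add,
    neg_one_pow_natAbs_sub_one]
  ring

lemma Uop_apply' (u : L2 (Zlat ν)) (n : Zlat ν) :
    (Uop ν u : Zlat ν → ℂ) n = (-1 : ℂ) ^ normOne n * (u : Zlat ν → ℂ) n := by
  simp only [Uop, mulOp_apply]
  push_cast
  ring

lemma Uop_Uop (u : L2 (Zlat ν)) : Uop ν (Uop ν u) = u := by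
  apply lp.ext; funext n
  rw [Uop_apply', Uop_apply', ← mul_assoc, ← pow_add,
    Even.neg_one_pow ⟨normOne n, by ring⟩, one_mul]

lemma Uop_ne_zero {u : L2 (Zlat ν)} (hu : u ≠ 0) : Uop ν u ≠ 0 := by
  intro h; apply hu
  have h2 := congrArg (Uop ν) h
  rwa [Uop_Uop, map_zero] at h2

lemma mulOp_Uop (V : Zlat ν → ℝ) (C : ℝ) (hC : ∀ n, |V n| ≤ C) (u : L2 (Zlat ν)) :
    mulOp V C hC (Uop ν u) = Uop ν (mulOp V C hC u) := by
  apply lp.ext; funext n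
  rw [mulOp_apply, Uop_apply', Uop_apply', mulOp_apply]; ring

lemma Uop_sa (u v : L2 (Zlat ν)) : ⟪Uop ν u, v⟫_ℂ = ⟪u, Uop ν v⟫_ℂ :=
  mulOp_sa _ _ _ u v

lemma inner_Uop_Uop (u v : L2 (Zlat ν)) : ⟪Uop ν u, Uop ν v⟫_ℂ = ⟪u, v⟫_ℂ := by
  rw [Uop_sa, Uop_Uop]

lemma norm_Uop (u : L2 (Zlat ν)) : ‖Uop ν u‖ = ‖u‖ := by
  have h1 : ‖Uop ν u‖ ^ 2 = ‖u‖ ^ 2 := by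
    rw [← re_inner_self, ← re_inner_self, inner_Uop_Uop]
  nlinarith [norm_nonneg (Uop ν u), norm_nonneg u]

lemma H0_Uop (u : L2 (Zlat ν)) : H0 ν (Uop ν u) = -(Uop ν (H0 ν u)) := by
  apply lp.ext; funext n
  have hterm : ∀ i : Fin ν,
      (Uop ν u : Zlat ν → ℂ) (n + unitVec ν i) + (Uop ν u : Zlat ν → ℂ) (n - unitVec ν i)
      = -((-1:ℂ) ^ normOne n *
          ((u : Zlat ν → ℂ) (n + unitVec ν i) + (u : Zlat ν → ℂ) (n - unitVec ν i))) := by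
    intro i
    rw [Uop_apply', Uop_apply', normOne_add_unitVec, normOne_sub_unitVec]
    ring
  rw [H0_apply, Finset.sum_congr rfl (fun i _ => hterm i)]
  rw [lp.coeFn_neg, Pi.neg_apply, Uop_apply', H0_apply, Finset.mul_sum]
  rw [← Finset.sum_neg_distrib]

lemma mulOp_neg (V : Zlat ν → ℝ) (C : ℝ) (hC : ∀ n, |V n| ≤ C)
    (hC2 : ∀ n, |-(V n)| ≤ C) (u : L2 (Zlat ν)) :
    mulOp (fun n => -(V n)) C hC2 u = -(mulOp V C hC u) := by
  apply lp.ext; funext n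
  rw [lp.coeFn_neg, Pi.neg_apply, mulOp_apply, mulOp_apply]
  push_cast; ring

lemma schro_sa (V : Zlat ν → ℝ) (C : ℝ) (hC : ∀ n, |V n| ≤ C) (u v : L2 (Zlat ν)) :
    ⟪(H0 ν + mulOp V C hC) u, v⟫_ℂ = ⟪u, (H0 ν + mulOp V C hC) v⟫_ℂ := by
  simp only [ContinuousLinearMap.add_apply, inner_add_left, inner_add_right,
    H0_sa, mulOp_sa]

section Forms

variable {α : Type*} (T : L2 α →L[ℂ] L2 α)

lemma norm_add_sq' (x y : L2 α) :
    ‖x + y‖ ^ 2 = ‖x‖ ^ 2 + 2 * (⟪x, y⟫_ℂ).re + ‖y‖ ^ 2 :=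
  norm_add_sq (𝕜 := ℂ) x y

lemma norm_sub_sq' (x y : L2 α) :
    ‖x - y‖ ^ 2 = ‖x‖ ^ 2 - 2 * (⟪x, y⟫_ℂ).re + ‖y‖ ^ 2 :=
  norm_sub_sq (𝕜 := ℂ) x y

lemma form_sym (hT : ∀ u v, ⟪T u, v⟫_ℂ = ⟪u, T v⟫_ℂ) (x y : L2 α) :
    (⟪y, T x⟫_ℂ).re = (⟪x, T y⟫_ℂ).re := by
  have h1 : ⟪y, T x⟫_ℂ = conj ⟪T x, y⟫_ℂ := (inner_conj_symm _ _).symm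
  rw [h1, hT x y, Complex.conj_re]

lemma form_add (x y : L2 α) :
    (⟪x + y, T (x + y)⟫_ℂ).re
      = (⟪x, T x⟫_ℂ).re + (⟪x, T y⟫_ℂ).re + (⟪y, T x⟫_ℂ).re + (⟪y, T y⟫_ℂ).re := by
  simp only [map_add, inner_add_left, inner_add_right, Complex.add_re]
  ring

lemma form_sub (x y : L2 α) :
    (⟪x - y, T (x - y)⟫_ℂ).re
      = (⟪x, T x⟫_ℂ).re - (⟪x, T y⟫_ℂ).re - (⟪y, T x⟫_ℂ).re + (⟪y, T y⟫_ℂ).re := by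
  simp only [map_sub, inner_sub_left, inner_sub_right, Complex.sub_re]
  ring

lemma form_smul (x : L2 α) (c : ℝ) :
    (⟪(c:ℂ) • x, T ((c:ℂ) • x)⟫_ℂ).re = c ^ 2 * (⟪x, T x⟫_ℂ).re := by
  rw [map_smul, inner_smul_left, inner_smul_right, Complex.conj_ofReal, ← mul_assoc,
    ← Complex.ofReal_mul, Complex.re_ofReal_mul]
  ring

lemma form_smul_inv (x y : L2 α) {s : ℝ} (hs : s ≠ 0) :
    (⟪(s:ℂ) • x, T (((s⁻¹ : ℝ):ℂ) • y)⟫_ℂ).re = (⟪x, T y⟫_ℂ).re := by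
  rw [map_smul, inner_smul_left, inner_smul_right, Complex.conj_ofReal, ← mul_assoc,
    ← Complex.ofReal_mul, mul_inv_cancel₀ hs]
  simp

lemma form_cs (hT : ∀ u v, ⟪T u, v⟫_ℂ = ⟪u, T v⟫_ℂ)
    (hpos : ∀ z, 0 ≤ (⟪z, T z⟫_ℂ).re) (x y : L2 α) :
    (⟪x, T y⟫_ℂ).re ^ 2 ≤ (⟪x, T x⟫_ℂ).re * (⟪y, T y⟫_ℂ).re := by
  have key : ∀ t : ℝ, 0 ≤ (⟪y, T y⟫_ℂ).re * (t * t)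
      + (2 * (⟪x, T y⟫_ℂ).re) * t + (⟪x, T x⟫_ℂ).re := by
    intro t
    have e1 : (⟪x + (t:ℂ) • y, T (x + (t:ℂ) • y)⟫_ℂ).re
        = (⟪x, T x⟫_ℂ).re + t * (⟪x, T y⟫_ℂ).re + t * (⟪y, T x⟫_ℂ).re
          + t * t * (⟪y, T y⟫_ℂ).re := by
      simp only [map_add, map_smul, inner_add_left, inner_add_right, inner_smul_left,
        inner_smul_right, Complex.conj_ofReal, Complex.add_re, Complex.re_ofReal_mul]
      ring
    have e2 := form_sym T hT x y
    have h1 := hpos (x + (t:ℂ) • y)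
    rw [e1, e2] at h1
    linarith
  have hd := discrim_le_zero key
  rw [discrim] at hd
  nlinarith [hd]

lemma amgm_bound {A B p : ℝ} (hA : 0 ≤ A) (hB : 0 ≤ B) (hp : 0 < p)
    (h : ∀ t : ℝ, 0 < t → 2 * p ≤ t * A + B / t) : p ^ 2 ≤ A * B := by
  rcases eq_or_lt_of_le hA with hA0 | hA0
  · exfalso
    have h1 := h (B / p + 1) (by positivity)
    rw [← hA0] at h1
    have h2 : B / (B / p + 1) < p := by
      rw [div_lt_iff₀ (by positivity)]
      have hpb : p * (B / p) = B := by field_simp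
      nlinarith [hpb]
    nlinarith
  · have h1 := h (p / A) (by positivity)
    have h2 : p / A * A = p := div_mul_cancel₀ p (ne_of_gt hA0)
    have h3 : B / (p / A) = B * A / p := by field_simp
    rw [h2, h3] at h1
    have h4 : p * (2 * p) ≤ p * (p + B * A / p) := by
      apply mul_le_mul_of_nonneg_left _ (le_of_lt hp)
      linarith
    have h5 : p * (B * A / p) = B * A := by field_simp
    nlinarith

end Forms

/-- The quadratic form of `2ν - H₀`. -/
def aForm (ν : ℕ) (z : L2 (Zlat ν)) : ℝ := 2 * ν * ‖z‖ ^ 2 - (⟪z, H0 ν z⟫_ℂ).re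

lemma aForm_def (z : L2 (Zlat ν)) :
    aForm ν z = 2 * ν * ‖z‖ ^ 2 - (⟪z, H0 ν z⟫_ℂ).re := rfl

set_option maxHeartbeats 2000000 in
lemma W_form_bound (hν : 1 ≤ ν) (V : Zlat ν → ℝ) (C : ℝ) (hC : ∀ n, |V n| ≤ C)
    (hb : ∀ φ : L2 (Zlat ν), |(⟪φ, (H0 ν + mulOp V C hC) φ⟫_ℂ).re| ≤ 2 * ν * ‖φ‖ ^ 2)
    (ψ : L2 (Zlat ν)) :
    ‖mulOp V C hC ψ‖ ^ 2
      ≤ 4 * ν * (2 * ν * ‖ψ‖ ^ 2 - (⟪ψ, H0 ν ψ⟫_ℂ).re) := by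
  set B := mulOp V C hC with hBdef
  set a : L2 (Zlat ν) → ℝ := aForm ν with hadef
  have haval : ∀ z, a z = 2 * ν * ‖z‖ ^ 2 - (⟪z, H0 ν z⟫_ℂ).re := fun z => aForm_def z
  have hH0 : ∀ z : L2 (Zlat ν), |(⟪z, H0 ν z⟫_ℂ).re| ≤ 2 * ν * ‖z‖ ^ 2 := by
    intro z
    refine (abs_re_inner_le (H0 ν) z).trans ?_
    have := norm_H0_le (ν := ν)
    nlinarith [sq_nonneg ‖z‖]
  have ha_nonneg : ∀ z, 0 ≤ a z := by
    intro z
    have h1 := (abs_le.mp (hH0 z)).2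
    rw [haval]
    linarith
  have hdom : ∀ z : L2 (Zlat ν), |(⟪z, B z⟫_ℂ).re| ≤ a z := by
    intro z
    have h1 := hb z
    have hsplit : (⟪z, (H0 ν + B) z⟫_ℂ).re = (⟪z, H0 ν z⟫_ℂ).re + (⟪z, B z⟫_ℂ).re := by
      rw [ContinuousLinearMap.add_apply, inner_add_right, Complex.add_re]
    rw [hsplit] at h1
    have h2 := hb (Uop ν z)
    have hUz : (⟪Uop ν z, (H0 ν + B) (Uop ν z)⟫_ℂ).re
        = -(⟪z, H0 ν z⟫_ℂ).re + (⟪z, B z⟫_ℂ).re := by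
      have e1 : (H0 ν + B) (Uop ν z) = -(Uop ν (H0 ν z)) + Uop ν (B z) := by
        rw [ContinuousLinearMap.add_apply, H0_Uop, hBdef, mulOp_Uop]
      rw [e1, inner_add_right, inner_neg_right, inner_Uop_Uop, inner_Uop_Uop,
        Complex.add_re, Complex.neg_re]
    rw [hUz, norm_Uop] at h2
    have h1' := abs_le.mp h1
    have h2' := abs_le.mp h2
    rw [haval]
    refine abs_le.mpr ⟨by linarith [h2'.1], by linarith [h1'.2]⟩
  have hBsa : ∀ u v : L2 (Zlat ν), ⟪B u, v⟫_ℂ = ⟪u, B v⟫_ℂ := mulOp_sa V C hC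
  have step1 : ∀ x y : L2 (Zlat ν), (⟪x, B y⟫_ℂ).re ≤ (a x + a y) / 2 := by
    intro x y
    have hfa := form_add B x y
    have hfs := form_sub B x y
    have hsym := form_sym B hBsa x y
    have hd1 := (abs_le.mp (hdom (x + y))).2
    have hd2 := (abs_le.mp (hdom (x - y))).1
    have hkey : 4 * (⟪x, B y⟫_ℂ).re ≤ a (x + y) + a (x - y) := by linarith
    have hpar : a (x + y) + a (x - y) = 2 * a x + 2 * a y := by
      rw [haval, haval, haval, haval, norm_add_sq', norm_sub_sq',
        form_add (H0 ν) x y, form_sub (H0 ν) x y]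
      ring
    linarith
  clear hdom hb
  set Q := ‖B ψ‖ ^ 2 with hQdef
  have hQnn : 0 ≤ Q := sq_nonneg _
  have hQBB : (⟪ψ, B (B ψ)⟫_ℂ).re = Q := by
    rw [← hBsa ψ (B ψ), re_inner_self]
  have ha_smul : ∀ (z : L2 (Zlat ν)) (c : ℝ), a ((c:ℂ) • z) = c ^ 2 * a z := by
    intro z c
    rw [haval, haval, form_smul (H0 ν) z c, norm_smul]
    simp only [Complex.norm_real, Real.norm_eq_abs]
    rw [mul_pow, sq_abs]
    ring
  have haB : a (B ψ) ≤ 4 * ν * Q := by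
    have h1 := (abs_le.mp (hH0 (B ψ))).1
    rw [haval]
    have : (ν:ℝ) ≥ 1 := by exact_mod_cast hν
    nlinarith
  have hamgm : ∀ t : ℝ, 0 < t → 2 * Q ≤ t * a ψ + a (B ψ) / t := by
    intro t ht
    set s := Real.sqrt t with hsdef
    have hs0 : 0 < s := Real.sqrt_pos.mpr ht
    have hs : s ≠ 0 := ne_of_gt hs0
    have hs2 : s ^ 2 = t := Real.sq_sqrt (le_of_lt ht)
    have hQs : (⟪(s:ℂ) • ψ, B (((s⁻¹ : ℝ):ℂ) • (B ψ))⟫_ℂ).re = Q := by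
      rw [form_smul_inv B ψ (B ψ) hs, hQBB]
    have h1 := step1 ((s:ℂ) • ψ) (((s⁻¹ : ℝ):ℂ) • (B ψ))
    rw [hQs, ha_smul, ha_smul, hs2] at h1
    have hinv : (s⁻¹) ^ 2 = t⁻¹ := by
      rw [inv_pow, hs2]
    rw [hinv] at h1
    have : a (B ψ) * t⁻¹ = a (B ψ) / t := by ring
    linarith [h1]
  have hfin : Q ≤ 4 * ↑ν * a ψ := by
    rcases eq_or_lt_of_le hQnn with hQ0 | hQpos
    · rw [← hQ0]
      have := ha_nonneg ψ
      positivity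
    · have hsq := amgm_bound (ha_nonneg ψ) (ha_nonneg (B ψ)) hQpos hamgm
      have h6 : Q ^ 2 ≤ a ψ * (4 * ν * Q) :=
        hsq.trans (mul_le_mul_of_nonneg_left haB (ha_nonneg ψ))
      nlinarith [h6, hQpos]
  rw [haval ψ] at hfin
  exact hfin

lemma norm_mulOp_le {α : Type*} (V : α → ℝ) (C : ℝ) (hC : ∀ n, |V n| ≤ C) :
    ‖mulOp V C hC‖ ≤ max C 0 :=
  LinearMap.mkContinuous_norm_le _ (le_max_right _ _) _

set_option synthInstance.maxHeartbeats 1000000 in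
lemma mulOp_subseq (V : Zlat ν → ℝ) (C : ℝ) (hC : ∀ n, |V n| ≤ C)
    (hV : Filter.Tendsto V Filter.cofinite (nhds 0))
    (φ : ℕ → L2 (Zlat ν)) (hφ : ∀ k, ‖φ k‖ = 1) :
    ∃ (w : L2 (Zlat ν)) (g : ℕ → ℕ), StrictMono g ∧
      Filter.Tendsto (fun j => mulOp V C hC (φ (g j))) Filter.atTop (nhds w) := by
  set K := mulOp V C hC with hKdef
  have hKop : ‖K‖ ≤ max C 0 := norm_mulOp_le V C hC
  have hDtb : TotallyBounded (K '' Metric.closedBall 0 1) := by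
    rw [Metric.totallyBounded_iff]
    intro ε hε
    have hfin : {n : Zlat ν | ¬ |V n| < ε / 4}.Finite := by
      have hmem := hV (Metric.ball_mem_nhds (0:ℝ) (show (0:ℝ) < ε / 4 by linarith))
      rw [Filter.mem_map, Filter.mem_cofinite] at hmem
      convert hmem using 1
      ext n
      simp [Metric.mem_ball, Real.dist_eq]
    set s : Finset (Zlat ν) := hfin.toFinset with hsdef
    have hsmall : ∀ n, n ∉ s → |V n| < ε / 4 := by
      intro n hn
      by_contra hcon
      exact hn (hfin.mem_toFinset.mpr hcon)
    have htail : ∀ n, |if n ∈ s then (0:ℝ) else V n| ≤ ε / 4 := by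
      intro n
      by_cases hn : n ∈ s
      · simp [hn]; linarith
      · simp only [if_neg hn]
        exact le_of_lt (hsmall n hn)
    set Kt := mulOp (fun n => if n ∈ s then (0:ℝ) else V n) (ε / 4) htail with hKtdef
    have hKtop : ‖Kt‖ ≤ ε / 4 := by
      refine (norm_mulOp_le _ _ _).trans ?_
      rw [max_eq_left (by linarith)]
    set F : Submodule ℂ (L2 (Zlat ν)) :=
      Submodule.span ℂ ((fun n => lp.single 2 n (1:ℂ)) '' (s : Set (Zlat ν))) with hFdef
    haveI hFfd : FiniteDimensional ℂ F :=
      FiniteDimensional.span_of_finite ℂ (s.finite_toSet.image _)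
    haveI : ProperSpace F := FiniteDimensional.proper ℂ F
    set ρ : ℝ := max C 0 + ε with hρdef
    have hBc : IsCompact (Subtype.val '' Metric.closedBall (0 : F) ρ) :=
      (isCompact_closedBall (0 : F) ρ).image continuous_subtype_val
    obtain ⟨t, htfin, htcov⟩ :=
      Metric.totallyBounded_iff.mp hBc.totallyBounded (ε / 2) (by linarith)
    refine ⟨t, htfin, ?_⟩
    rintro x ⟨u, hu, rfl⟩
    have hu1 : ‖u‖ ≤ 1 := by
      rwa [Metric.mem_closedBall, dist_zero_right] at hu
    set y : L2 (Zlat ν) :=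
      ∑ n ∈ s, lp.single 2 n ((V n : ℂ) * (u : Zlat ν → ℂ) n) with hydef
    have hyco : ∀ m, (y : Zlat ν → ℂ) m
        = if m ∈ s then (V m : ℂ) * (u : Zlat ν → ℂ) m else 0 := by
      intro m
      rw [hydef]
      simp only [lp.coeFn_sum, Finset.sum_apply, lp.single_apply, Pi.single_apply, Finset.sum_ite_eq]
    have hKty : K u - y = Kt u := by
      apply lp.ext; funext m
      rw [lp.coeFn_sub, Pi.sub_apply, mulOp_apply, mulOp_apply, hyco]
      by_cases hm : m ∈ s <;> simp [hm]
    have hdist : ‖K u - y‖ ≤ ε / 4 := by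
      rw [hKty]
      refine (Kt.le_opNorm u).trans ?_
      calc ‖Kt‖ * ‖u‖ ≤ (ε / 4) * 1 :=
            mul_le_mul hKtop hu1 (norm_nonneg u) (by linarith)
        _ = ε / 4 := mul_one _
    have hyF : y ∈ F := by
      rw [hydef]
      refine Submodule.sum_mem F fun n hn => ?_
      have hsingle := lp.single_smul (E := fun _ : Zlat ν => ℂ) 2 n
        ((V n : ℂ) * (u : Zlat ν → ℂ) n) (1:ℂ)
      rw [smul_eq_mul, mul_one] at hsingle
      rw [hsingle]
      refine Submodule.smul_mem F _ (Submodule.subset_span ?_)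
      exact Set.mem_image_of_mem _ (Finset.mem_coe.mpr hn)
    have hynorm : ‖y‖ ≤ ρ := by
      have h1 : ‖K u‖ ≤ max C 0 := by
        refine (K.le_opNorm u).trans ?_
        calc ‖K‖ * ‖u‖ ≤ max C 0 * 1 :=
              mul_le_mul hKop hu1 (norm_nonneg u) (le_max_right C 0)
          _ = max C 0 := mul_one _
      have h2 : ‖y‖ ≤ ‖K u‖ + ‖K u - y‖ := by
        calc ‖y‖ = ‖K u - (K u - y)‖ := by congr 1; abel
          _ ≤ ‖K u‖ + ‖K u - y‖ := norm_sub_le _ _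
      rw [hρdef]
      linarith
    have hymem : y ∈ Subtype.val '' Metric.closedBall (0 : F) ρ := by
      refine ⟨⟨y, hyF⟩, ?_, rfl⟩
      rw [Metric.mem_closedBall, dist_zero_right]
      exact hynorm
    obtain ⟨c, hct, hyc⟩ := Set.mem_iUnion₂.mp (htcov hymem)
    refine Set.mem_iUnion₂.mpr ⟨c, hct, ?_⟩
    rw [Metric.mem_ball] at hyc ⊢
    calc dist (K u) c ≤ dist (K u) y + dist y c := dist_triangle _ _ _
      _ < ε / 4 + ε / 2 := by
          refine add_lt_add_of_le_of_lt ?_ hyc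
          rw [dist_eq_norm]
          exact hdist
      _ < ε := by linarith
  have hDc : IsCompact (closure (K '' Metric.closedBall 0 1)) :=
    TotallyBounded.isCompact_of_isClosed hDtb.closure isClosed_closure
  have hmem : ∀ k, K (φ k) ∈ closure (K '' Metric.closedBall 0 1) := fun k =>
    subset_closure ⟨φ k, by
      rw [Metric.mem_closedBall, dist_zero_right, hφ k], rfl⟩
  obtain ⟨w, -, g, hg, hten⟩ := hDc.tendsto_subseq hmem
  exact ⟨w, g, hg, hten⟩

lemma re_inner_comm {α : Type*} (x y : L2 α) : (⟪x, y⟫_ℂ).re = (⟪y, x⟫_ℂ).re := by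
  rw [← inner_conj_symm]
  exact Complex.conj_re _

set_option maxHeartbeats 2000000 in
set_option synthInstance.maxHeartbeats 1000000 in
lemma exists_eigenvalue (hν : 1 ≤ ν) (V : Zlat ν → ℝ) (C : ℝ) (hC : ∀ n, |V n| ≤ C)
    (hV : Filter.Tendsto V Filter.cofinite (nhds 0))
    (φ₀ : L2 (Zlat ν))
    (hφ₀ : 2 * ν * ‖φ₀‖ ^ 2 < (⟪φ₀, (H0 ν + mulOp V C hC) φ₀⟫_ℂ).re) :
    ∃ lam : ℝ, 2 * ν < lam ∧ IsEigenvalue (H0 ν + mulOp V C hC) lam := by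
  have hν' : (1:ℝ) ≤ ν := by exact_mod_cast hν
  set T := H0 ν + mulOp V C hC with hTdef
  have hTsa : ∀ u v, ⟪T u, v⟫_ℂ = ⟪u, T v⟫_ℂ := schro_sa V C hC
  set M := ‖T‖ with hMdef
  have hM0 : 0 ≤ M := norm_nonneg T
  have habs : ∀ z : L2 (Zlat ν), |(⟪z, T z⟫_ℂ).re| ≤ M * ‖z‖ ^ 2 :=
    fun z => abs_re_inner_le T z
  have hφ0ne : φ₀ ≠ 0 := by
    intro h0
    rw [h0] at hφ₀
    simp at hφ₀
  set S : Set ℝ := (fun z => (⟪z, T z⟫_ℂ).re) '' {z : L2 (Zlat ν) | ‖z‖ = 1} with hSdef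
  have hnorm0 : ‖φ₀‖ ≠ 0 := norm_ne_zero_iff.mpr hφ0ne
  have hnormpos : 0 < ‖φ₀‖ := norm_pos_iff.mpr hφ0ne
  have hz₀ : ‖((‖φ₀‖⁻¹ : ℝ) : ℂ) • φ₀‖ = 1 := by
    rw [norm_smul, Complex.norm_real, Real.norm_eq_abs, abs_of_pos (by positivity)]
    exact inv_mul_cancel₀ hnorm0
  have hSmem : ((‖φ₀‖⁻¹:ℝ)^2 * (⟪φ₀, T φ₀⟫_ℂ).re) ∈ S := by
    refine ⟨((‖φ₀‖⁻¹ : ℝ) : ℂ) • φ₀, hz₀, ?_⟩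
    exact form_smul T φ₀ _
  have hSne : S.Nonempty := ⟨_, hSmem⟩
  have hSbdd : BddAbove S := by
    refine ⟨M, ?_⟩
    rintro r ⟨z, hz, rfl⟩
    rw [Set.mem_setOf_eq] at hz
    have h1 := (abs_le.mp (habs z)).2
    rw [hz] at h1
    simpa using h1
  set lam := sSup S with hlamdef
  have hlam_ge : 2 * ν < lam := by
    have hle := le_csSup hSbdd hSmem
    have hc2 : (‖φ₀‖⁻¹:ℝ)^2 * ‖φ₀‖^2 = 1 := by
      field_simp
    have hcpos : (0:ℝ) < (‖φ₀‖⁻¹)^2 := by positivity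
    nlinarith [mul_lt_mul_of_pos_left hφ₀ hcpos]
  have hlampos : 0 < lam := by linarith
  have hlamM : 0 < lam + M := by linarith
  have hquad : ∀ z : L2 (Zlat ν), (⟪z, T z⟫_ℂ).re ≤ lam * ‖z‖ ^ 2 := by
    intro z
    by_cases hz : z = 0
    · rw [hz]; simp
    · have hzn : (0:ℝ) < ‖z‖ := norm_pos_iff.mpr hz
      have hz1 : ‖((‖z‖⁻¹ : ℝ) : ℂ) • z‖ = 1 := by
        rw [norm_smul, Complex.norm_real, Real.norm_eq_abs, abs_of_pos (by positivity)]
        exact inv_mul_cancel₀ (ne_of_gt hzn)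
      have hmem : ((‖z‖⁻¹:ℝ)^2 * (⟪z, T z⟫_ℂ).re) ∈ S := ⟨_, hz1, form_smul T z _⟩
      have hle := le_csSup hSbdd hmem
      have heq : (⟪z, T z⟫_ℂ).re = ((‖z‖⁻¹:ℝ)^2 * (⟪z, T z⟫_ℂ).re) * ‖z‖^2 := by
        field_simp
      rw [heq]
      exact mul_le_mul_of_nonneg_right hle (sq_nonneg _)
  -- the nonnegative shifted operator S = T + M
  set Sop : L2 (Zlat ν) →L[ℂ] L2 (Zlat ν) := T + (M:ℂ) • ContinuousLinearMap.id ℂ _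
    with hSopdef
  have hSopapp : ∀ x, Sop x = T x + (M:ℂ) • x := by
    intro x
    rw [hSopdef]
    rfl
  have hSopsa : ∀ u v, ⟪Sop u, v⟫_ℂ = ⟪u, Sop v⟫_ℂ := by
    intro u v
    rw [hSopapp, hSopapp, inner_add_left, inner_add_right, inner_smul_left,
      inner_smul_right, Complex.conj_ofReal, hTsa]
  have hSopval : ∀ z, (⟪z, Sop z⟫_ℂ).re = (⟪z, T z⟫_ℂ).re + M * ‖z‖^2 := by
    intro z
    rw [hSopapp, inner_add_right, Complex.add_re, inner_smul_right,
      Complex.re_ofReal_mul, re_inner_self]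
  have hSoppos : ∀ z, 0 ≤ (⟪z, Sop z⟫_ℂ).re := by
    intro z
    rw [hSopval]
    have := (abs_le.mp (habs z)).1
    linarith
  have claim1 : ∀ x, ‖Sop x‖^2 ≤ (lam + M) * (⟪x, Sop x⟫_ℂ).re := by
    intro x
    have hcs := form_cs Sop hSopsa hSoppos x (Sop x)
    have e1 : (⟪x, Sop (Sop x)⟫_ℂ).re = ‖Sop x‖^2 := by
      rw [← hSopsa x (Sop x), re_inner_self]
    have e2 : (⟪Sop x, Sop (Sop x)⟫_ℂ).re ≤ (lam + M) * ‖Sop x‖^2 := by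
      rw [hSopval]
      have := hquad (Sop x)
      nlinarith [sq_nonneg ‖Sop x‖]
    rw [e1] at hcs
    rcases eq_or_lt_of_le (sq_nonneg ‖Sop x‖) with h0 | hpos
    · rw [← h0]
      exact mul_nonneg (le_of_lt hlamM) (hSoppos x)
    · nlinarith [hSoppos x, hcs, e2]
  -- maximizing sequence
  have hseq : ∀ k : ℕ, ∃ z : L2 (Zlat ν), ‖z‖ = 1 ∧
      lam - 1/((k:ℝ)+1) < (⟪z, T z⟫_ℂ).re := by
    intro k
    have hlt : lam - 1/((k:ℝ)+1) < lam := by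
      have : (0:ℝ) < 1/((k:ℝ)+1) := by positivity
      linarith
    obtain ⟨r, hrS, hrlt⟩ := exists_lt_of_lt_csSup hSne hlt
    obtain ⟨z, hz1, rfl⟩ := hrS
    exact ⟨z, hz1, hrlt⟩
  choose φ hφ1 hφ2 using hseq
  have herr : ∀ k : ℕ, ‖T (φ k) - (lam:ℂ) • (φ k)‖^2 ≤ (lam + M) * (1/((k:ℝ)+1)) := by
    intro k
    have hvec : T (φ k) - (lam:ℂ) • (φ k) = Sop (φ k) - (((lam + M : ℝ)):ℂ) • (φ k) := by
      rw [hSopapp, Complex.ofReal_add, add_smul]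
      abel
    rw [hvec, norm_sub_sq' (Sop (φ k)) ((((lam + M : ℝ)):ℂ) • (φ k))]
    have hip : (⟪Sop (φ k), (((lam + M : ℝ)):ℂ) • (φ k)⟫_ℂ).re
        = (lam + M) * (⟪φ k, Sop (φ k)⟫_ℂ).re := by
      rw [inner_smul_right]
      rw [Complex.re_ofReal_mul]
      rw [re_inner_comm]
    have hnrm : ‖(((lam + M : ℝ)):ℂ) • (φ k)‖^2 = (lam + M)^2 := by
      rw [norm_smul, Complex.norm_real, Real.norm_eq_abs, abs_of_pos hlamM, hφ1 k,
        mul_one]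
    rw [hip, hnrm]
    have hσ : lam + M - 1/((k:ℝ)+1) < (⟪φ k, Sop (φ k)⟫_ℂ).re := by
      rw [hSopval, hφ1 k]
      have := hφ2 k
      nlinarith
    have hσle : (⟪φ k, Sop (φ k)⟫_ℂ).re ≤ lam + M := by
      rw [hSopval, hφ1 k]
      have := hquad (φ k)
      rw [hφ1 k] at this
      nlinarith
    have hc1 := claim1 (φ k)
    nlinarith [hσ, hσle, hc1, hlamM]
  have hε0 : Filter.Tendsto (fun k => T (φ k) - (lam:ℂ) • (φ k))
      Filter.atTop (nhds 0) := by
    rw [tendsto_zero_iff_norm_tendsto_zero]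
    have hb : ∀ k : ℕ, ‖T (φ k) - (lam:ℂ) • (φ k)‖
        ≤ Real.sqrt ((lam + M) * (1/((k:ℝ)+1))) := by
      intro k
      have h1 : ‖T (φ k) - (lam:ℂ) • (φ k)‖
          = Real.sqrt (‖T (φ k) - (lam:ℂ) • (φ k)‖^2) :=
        (Real.sqrt_sq (norm_nonneg _)).symm
      rw [h1]
      exact Real.sqrt_le_sqrt (herr k)
    refine squeeze_zero (fun k => norm_nonneg _) hb ?_
    have h2 : Filter.Tendsto (fun k : ℕ => (lam + M) * (1/((k:ℝ)+1)))
        Filter.atTop (nhds 0) := by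
      have h3 := tendsto_one_div_add_atTop_nhds_zero_nat.const_mul (lam + M)
      simpa using h3
    have h4 := (Real.continuous_sqrt.tendsto 0).comp h2
    simpa [Function.comp_def] using h4
  -- resolvent of H0 at lam
  have hlamne : (lam:ℂ) ≠ 0 := by
    simp only [ne_eq, Complex.ofReal_eq_zero]
    linarith
  have hH0small : ‖(lam:ℂ)⁻¹ • H0 ν‖ < 1 := by
    rw [norm_smul ((lam:ℂ)⁻¹) (H0 ν), norm_inv, Complex.norm_real, Real.norm_eq_abs,
      abs_of_pos hlampos]
    have h1 : ‖H0 ν‖ ≤ 2 * ν := norm_H0_le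
    have h2 : lam⁻¹ * ‖H0 ν‖ < lam⁻¹ * lam := by
      apply mul_lt_mul_of_pos_left _ (by positivity)
      linarith
    rwa [inv_mul_cancel₀ (ne_of_gt hlampos)] at h2
  set u1 := Units.oneSub ((lam:ℂ)⁻¹ • H0 ν) hH0small with hu1def
  have hinv : ∀ x, (↑u1⁻¹ : L2 (Zlat ν) →L[ℂ] L2 (Zlat ν)) ((↑u1 : _ →L[ℂ] _) x) = x := by
    intro x
    have hmul : ((↑u1⁻¹ : L2 (Zlat ν) →L[ℂ] L2 (Zlat ν)) * ↑u1) = 1 := u1.inv_mul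
    calc (↑u1⁻¹ : L2 (Zlat ν) →L[ℂ] L2 (Zlat ν)) ((↑u1 : _ →L[ℂ] _) x)
        = ((↑u1⁻¹ : L2 (Zlat ν) →L[ℂ] L2 (Zlat ν)) * ↑u1) x := rfl
      _ = x := by rw [hmul]; rfl
  have hφrep : ∀ k, φ k = (↑u1⁻¹ : L2 (Zlat ν) →L[ℂ] L2 (Zlat ν))
      ((lam:ℂ)⁻¹ • (mulOp V C hC (φ k) - (T (φ k) - (lam:ℂ) • (φ k)))) := by
    intro k
    have hu1x : (↑u1 : L2 (Zlat ν) →L[ℂ] L2 (Zlat ν)) (φ k)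
        = (lam:ℂ)⁻¹ • (mulOp V C hC (φ k) - (T (φ k) - (lam:ℂ) • (φ k))) := by
      have hval : (↑u1 : L2 (Zlat ν) →L[ℂ] L2 (Zlat ν)) (φ k)
          = φ k - (lam:ℂ)⁻¹ • (H0 ν (φ k)) := by
        rw [hu1def, Units.val_oneSub]
        simp
      rw [hval, hTdef]
      simp only [ContinuousLinearMap.add_apply]
      rw [smul_sub, smul_sub, smul_add, smul_smul, inv_mul_cancel₀ hlamne, one_smul]
      abel
    rw [← hu1x, hinv]
  obtain ⟨w, g, hg, hKten⟩ := mulOp_subseq V C hC hV φ hφ1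
  have hεg : Filter.Tendsto (fun j => T (φ (g j)) - (lam:ℂ) • (φ (g j)))
      Filter.atTop (nhds 0) := hε0.comp hg.tendsto_atTop
  have h1 : Filter.Tendsto
      (fun j => mulOp V C hC (φ (g j)) - (T (φ (g j)) - (lam:ℂ) • (φ (g j))))
      Filter.atTop (nhds (w - 0)) := hKten.sub hεg
  set ψ : L2 (Zlat ν) := (↑u1⁻¹ : L2 (Zlat ν) →L[ℂ] L2 (Zlat ν)) ((lam:ℂ)⁻¹ • (w - 0))
    with hψdef
  have hφg : Filter.Tendsto (fun j => φ (g j)) Filter.atTop (nhds ψ) := by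
    have h2 : Filter.Tendsto
        (fun j => (lam:ℂ)⁻¹ • (mulOp V C hC (φ (g j)) - (T (φ (g j)) - (lam:ℂ) • (φ (g j)))))
        Filter.atTop (nhds ((lam:ℂ)⁻¹ • (w - 0))) := h1.const_smul _
    have h3 := ((↑u1⁻¹ : L2 (Zlat ν) →L[ℂ] L2 (Zlat ν)).continuous.tendsto
      ((lam:ℂ)⁻¹ • (w - 0))).comp h2
    have h4 : (fun j => φ (g j)) = fun j => (↑u1⁻¹ : L2 (Zlat ν) →L[ℂ] L2 (Zlat ν))
        ((lam:ℂ)⁻¹ • (mulOp V C hC (φ (g j)) - (T (φ (g j)) - (lam:ℂ) • (φ (g j))))) := by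
      funext j
      exact hφrep (g j)
    rw [h4]
    exact h3
  have hψnorm : ‖ψ‖ = 1 := by
    have h5 : Filter.Tendsto (fun j => ‖φ (g j)‖) Filter.atTop (nhds ‖ψ‖) := hφg.norm
    have h6 : (fun j => ‖φ (g j)‖) = fun _ => (1:ℝ) := by
      funext j; exact hφ1 (g j)
    rw [h6] at h5
    exact (tendsto_nhds_unique tendsto_const_nhds h5).symm
  have hψeig : T ψ = (lam:ℂ) • ψ := by
    have h7 : Filter.Tendsto (fun j => T (φ (g j)) - (lam:ℂ) • (φ (g j)))
        Filter.atTop (nhds (T ψ - (lam:ℂ) • ψ)) := by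
      have hA := (T.continuous.tendsto ψ).comp hφg
      have hB := hφg.const_smul ((lam:ℂ))
      exact hA.sub hB
    have h8 := tendsto_nhds_unique h7 hεg
    have h9 : T ψ - (lam:ℂ) • ψ = 0 := h8
    rw [sub_eq_zero] at h9
    exact h9
  refine ⟨lam, hlam_ge, ψ, ?_, hψeig⟩
  intro h0
  rw [h0, norm_zero] at hψnorm
  norm_num at hψnorm

lemma mulOp_sq (V : Zlat ν → ℝ) (C C2 : ℝ) (hC : ∀ n, |V n| ≤ C)
    (hC2 : ∀ n, |(4 * (ν:ℝ))⁻¹ * V n ^ 2| ≤ C2) (ψ : L2 (Zlat ν)) :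
    mulOp (fun n => (4 * (ν:ℝ))⁻¹ * V n ^ 2) C2 hC2 ψ
      = (((4 * (ν:ℝ))⁻¹ : ℝ) : ℂ) • (mulOp V C hC (mulOp V C hC ψ)) := by
  apply lp.ext; funext n
  rw [lp.coeFn_smul, Pi.smul_apply, mulOp_apply, mulOp_apply, mulOp_apply, smul_eq_mul]
  push_cast
  ring

set_option maxHeartbeats 4000000 in
set_option synthInstance.maxHeartbeats 1000000 in
/-- Theorem 3.1, one bound state: if `V(n) → 0` and `H₀ + (4ν)⁻¹V²`
has an eigenvalue `E` with `|E| > 2ν`, then so does `H₀ + V`. -/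
theorem statement4 (ν : ℕ) (hν : 1 ≤ ν) (V : Zlat ν → ℝ) (C : ℝ) (hC : ∀ n, |V n| ≤ C)
    (hV0 : Filter.Tendsto V Filter.cofinite (nhds 0))
    (h : ∃ E : ℝ,
      IsEigenvalue (H0 ν + mulOp (fun n => (4 * (ν:ℝ))⁻¹ * V n ^ 2) ((4 * (ν:ℝ))⁻¹ * C ^ 2)
          (fun n => by
            have h := abs_mul_sq_le (γ := (4 * (ν:ℝ))⁻¹) (hC n)
            rw [abs_of_nonneg (by positivity : (0:ℝ) ≤ (4 * (ν:ℝ))⁻¹)] at h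
            simpa using h)) E ∧ 2 * (ν:ℝ) < |E|) :
    ∃ E' : ℝ, IsEigenvalue (H0 ν + mulOp V C hC) E' ∧ 2 * (ν:ℝ) < |E'| := by
  by_contra hcon
  push_neg at hcon
  obtain ⟨E, ⟨ψ, hψne, hψeq⟩, hE⟩ := h
  have hν' : (1:ℝ) ≤ ν := by exact_mod_cast hν
  -- Step 1: the quadratic form of H₀ + V is bounded by 2ν in absolute value.
  have hbound : ∀ φ : L2 (Zlat ν),
      |(⟪φ, (H0 ν + mulOp V C hC) φ⟫_ℂ).re| ≤ 2 * ν * ‖φ‖ ^ 2 := by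
    intro φ
    by_contra habs
    push_neg at habs
    rcases lt_abs.mp habs with hpos | hneg
    · obtain ⟨lam, hlam, heig⟩ := exists_eigenvalue hν V C hC hV0 φ hpos
      have h1 := hcon lam heig
      linarith [le_abs_self lam]
    · have hC2 : ∀ n, |-(V n)| ≤ C := fun n => by rw [abs_neg]; exact hC n
      have hV20 : Filter.Tendsto (fun n => -(V n)) Filter.cofinite (nhds 0) := by
        have := hV0.neg
        simpa using this
      have e1 : (H0 ν + mulOp (fun n => -(V n)) C hC2) (Uop ν φ)
          = -(Uop ν ((H0 ν + mulOp V C hC) φ)) := by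
        calc (H0 ν + mulOp (fun n => -(V n)) C hC2) (Uop ν φ)
            = H0 ν (Uop ν φ) + mulOp (fun n => -(V n)) C hC2 (Uop ν φ) := rfl
          _ = -(Uop ν (H0 ν φ)) + Uop ν (mulOp (fun n => -(V n)) C hC2 φ) := by
              rw [H0_Uop, mulOp_Uop]
          _ = -(Uop ν (H0 ν φ)) + Uop ν (-(mulOp V C hC φ)) := by
              rw [mulOp_neg V C hC hC2 φ]
          _ = -(Uop ν (H0 ν φ + mulOp V C hC φ)) := by
              rw [map_neg, map_add]; abel
          _ = -(Uop ν ((H0 ν + mulOp V C hC) φ)) := rfl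
      have hUφval : 2 * ν * ‖Uop ν φ‖ ^ 2
          < (⟪Uop ν φ, (H0 ν + mulOp (fun n => -(V n)) C hC2) (Uop ν φ)⟫_ℂ).re := by
        rw [e1, inner_neg_right, Complex.neg_re, inner_Uop_Uop, norm_Uop]
        linarith
      obtain ⟨mu, hmu, u, hune, hueq⟩ :=
        exists_eigenvalue hν (fun n => -(V n)) C hC2 hV20 (Uop ν φ) hUφval
      have htrans : (H0 ν + mulOp V C hC) (Uop ν u) = ((-mu : ℝ):ℂ) • (Uop ν u) := by
        have e2 : mulOp V C hC u = -(mulOp (fun n => -(V n)) C hC2 u) := by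
          rw [mulOp_neg V C hC hC2 u, neg_neg]
        have e3 : H0 ν u + mulOp (fun n => -(V n)) C hC2 u = (mu:ℂ) • u := hueq
        calc (H0 ν + mulOp V C hC) (Uop ν u)
            = H0 ν (Uop ν u) + mulOp V C hC (Uop ν u) := rfl
          _ = -(Uop ν (H0 ν u)) + Uop ν (mulOp V C hC u) := by
              rw [H0_Uop, mulOp_Uop]
          _ = -(Uop ν (H0 ν u)) + -(Uop ν (mulOp (fun n => -(V n)) C hC2 u)) := by
              rw [e2, map_neg]
          _ = -(Uop ν (H0 ν u + mulOp (fun n => -(V n)) C hC2 u)) := by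
              rw [map_add]; abel
          _ = -(Uop ν ((mu:ℂ) • u)) := by rw [e3]
          _ = ((-mu : ℝ):ℂ) • (Uop ν u) := by
              rw [map_smul, Complex.ofReal_neg, neg_smul]
      have heig2 : IsEigenvalue (H0 ν + mulOp V C hC) (-mu) :=
        ⟨Uop ν u, Uop_ne_zero hune, htrans⟩
      have h2 := hcon (-mu) heig2
      rw [abs_neg] at h2
      linarith [le_abs_self mu]
  -- Step 2: the quadratic form bound transfers to H₀ + (4ν)⁻¹ V².
  have hQ := W_form_bound hν V C hC hbound ψ
  set B := mulOp V C hC with hBdef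
  set Q := ‖B ψ‖ ^ 2 with hQdef
  have hQnn : 0 ≤ Q := sq_nonneg _
  have hWψ : mulOp (fun n => (4 * (ν:ℝ))⁻¹ * V n ^ 2) ((4 * (ν:ℝ))⁻¹ * C ^ 2)
      (fun n => by
            have h := abs_mul_sq_le (γ := (4 * (ν:ℝ))⁻¹) (hC n)
            rw [abs_of_nonneg (by positivity : (0:ℝ) ≤ (4 * (ν:ℝ))⁻¹)] at h
            simpa using h) ψ
      = (((4 * (ν:ℝ))⁻¹ : ℝ) : ℂ) • (B (B ψ)) := mulOp_sq V C _ hC _ ψ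
  have hsplit : E * ‖ψ‖ ^ 2 = (⟪ψ, H0 ν ψ⟫_ℂ).re + (4 * (ν:ℝ))⁻¹ * Q := by
    have hL : (⟪ψ, (E:ℂ) • ψ⟫_ℂ).re = E * ‖ψ‖ ^ 2 := by
      rw [inner_smul_right, Complex.re_ofReal_mul, re_inner_self]
    rw [← hL, ← hψeq]
    rw [ContinuousLinearMap.add_apply, inner_add_right, Complex.add_re, hWψ,
      inner_smul_right, Complex.re_ofReal_mul]
    have hBB : (⟪ψ, B (B ψ)⟫_ℂ).re = Q := by
      rw [← mulOp_sa V C hC ψ (B ψ), re_inner_self]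
    rw [hBB]
  have hH0ψ : |(⟪ψ, H0 ν ψ⟫_ℂ).re| ≤ 2 * ν * ‖ψ‖ ^ 2 := by
    refine (abs_re_inner_le (H0 ν) ψ).trans ?_
    have := norm_H0_le (ν := ν)
    nlinarith [sq_nonneg ‖ψ‖]
  have hψpos : 0 < ‖ψ‖ ^ 2 := by
    have := norm_pos_iff.mpr hψne
    positivity
  have hνpos : (0:ℝ) < 4 * ν := by linarith
  have hupper : E * ‖ψ‖ ^ 2 ≤ 2 * ν * ‖ψ‖ ^ 2 := by
    have h4 : (4 * (ν:ℝ))⁻¹ * Q ≤ (4 * (ν:ℝ))⁻¹ * (4 * ν * (2 * ν * ‖ψ‖ ^ 2 - (⟪ψ, H0 ν ψ⟫_ℂ).re)) :=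
      mul_le_mul_of_nonneg_left hQ (by positivity)
    have h5 : (4 * (ν:ℝ))⁻¹ * (4 * ν * (2 * ν * ‖ψ‖ ^ 2 - (⟪ψ, H0 ν ψ⟫_ℂ).re))
        = 2 * ν * ‖ψ‖ ^ 2 - (⟪ψ, H0 ν ψ⟫_ℂ).re := by
      field_simp
    rw [h5] at h4
    linarith [hsplit]
  have hlower : -(2 * ν * ‖ψ‖ ^ 2) ≤ E * ‖ψ‖ ^ 2 := by
    have h6 : 0 ≤ (4 * (ν:ℝ))⁻¹ * Q := by positivity
    have h7 := (abs_le.mp hH0ψ).1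
    linarith [hsplit]
  have hEabs : |E| ≤ 2 * ν := by
    rw [abs_le]
    constructor
    · nlinarith [hlower, hψpos]
    · nlinarith [hupper, hψpos]
  linarith

end DHKS
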